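/- Let t ∈ ℝ², R > 0, and let g : ℝ → ℝ be any function. Then ∑_{ξ primitive, 0 < ‖ξ‖ ≤ R} ⟨t, ξ⟩² · g(‖ξ‖) = (‖t‖²/2) · ∑_{ξ primitive, 0 < ‖ξ‖ ≤ R} ‖ξ‖² · g(‖ξ‖), where ⟨·,·⟩ is the standard inner product on ℝ². (Both sums are over the finite set of primitive lattice vectors in the closed disk of radius R.) -/

import Mathlib

open scoped RealInnerProductSpace

/-- The Euclidean norm of a lattice vector `ξ = (p,q) ∈ ℤ²`. -/
noncomputable def znorm (ξ : ℤ × ℤ) : ℝ := Real.sqrt ((ξ.1 : ℝ) ^ 2 + (ξ.2 : ℝ) ^ 2)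

/-- A primitive lattice vector: nonzero with coprime coordinates. -/
def IsPrimitive (ξ : ℤ × ℤ) : Prop := ξ ≠ 0 ∧ Int.gcd ξ.1 ξ.2 = 1

/-- The lattice point `ℓ ∈ ℤ²` viewed as a point of the Euclidean plane. -/
noncomputable def latPt (ℓ : ℤ × ℤ) : EuclideanSpace ℝ (Fin 2) :=
  (WithLp.equiv 2 (Fin 2 → ℝ)).symm ![(ℓ.1 : ℝ), (ℓ.2 : ℝ)]

lemma znorm_rot (ξ : ℤ × ℤ) : znorm (-ξ.2, ξ.1) = znorm ξ := by
  simp [znorm]; ring_nf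

lemma isPrimitive_rot {ξ : ℤ × ℤ} (h : IsPrimitive ξ) : IsPrimitive (-ξ.2, ξ.1) := by
  obtain ⟨h0, h1⟩ := h
  refine ⟨?_, ?_⟩
  · intro hc
    apply h0
    have : -ξ.2 = 0 ∧ ξ.1 = 0 := Prod.mk_inj.mp hc
    exact Prod.ext (by simpa using this.2) (by simpa using this.1)
  · simpa [Int.gcd_comm ξ.1 ξ.2] using h1

lemma key_inner (t : EuclideanSpace ℝ (Fin 2)) (ξ : ℤ × ℤ) :
    ⟪t, latPt ξ⟫ ^ 2 + ⟪t, latPt (-ξ.2, ξ.1)⟫ ^ 2 = ‖t‖ ^ 2 * znorm ξ ^ 2 := by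
  have hn : znorm ξ ^ 2 = (ξ.1 : ℝ) ^ 2 + (ξ.2 : ℝ) ^ 2 := Real.sq_sqrt (by positivity)
  have ht : ‖t‖ ^ 2 = t 0 ^ 2 + t 1 ^ 2 := by
    rw [EuclideanSpace.norm_eq, Real.sq_sqrt (by positivity)]
    simp [Fin.sum_univ_two]
  simp only [latPt, PiLp.inner_apply, Fin.sum_univ_two, WithLp.equiv_symm_apply, PiLp.toLp_apply,
    RCLike.inner_apply, conj_trivial, Matrix.cons_val_zero, Matrix.cons_val_one,
    Matrix.head_cons, hn, ht, Int.cast_neg]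
  ring

lemma finite_S (R : ℝ) : {ξ : ℤ × ℤ | IsPrimitive ξ ∧ znorm ξ ≤ R}.Finite := by
  apply Set.Finite.subset (Set.finite_Icc (⌊-R⌋, ⌊-R⌋) (⌈R⌉, ⌈R⌉))
  rintro ⟨p, q⟩ ⟨-, h⟩
  have hb : ∀ x y : ℤ, Real.sqrt ((x : ℝ) ^ 2 + (y : ℝ) ^ 2) ≤ R → |(x : ℝ)| ≤ R := by
    intro x y hxy
    calc |(x : ℝ)| = Real.sqrt ((x : ℝ) ^ 2) := (Real.sqrt_sq_eq_abs _).symm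
    _ ≤ Real.sqrt ((x : ℝ) ^ 2 + (y : ℝ) ^ 2) := Real.sqrt_le_sqrt (by nlinarith [sq_nonneg ((y:ℝ))])
    _ ≤ R := hxy
  have h' : Real.sqrt ((p : ℝ) ^ 2 + (q : ℝ) ^ 2) ≤ R := h
  have hp := hb p q h'
  have hq := hb q p (by rwa [add_comm] at h')
  rw [abs_le] at hp hq
  have mono : ∀ x : ℤ, -R ≤ (x : ℝ) → (x : ℝ) ≤ R → ⌊-R⌋ ≤ x ∧ x ≤ ⌈R⌉ := by
    intro x h1 h2
    constructor
    · have : (⌊-R⌋ : ℝ) ≤ (x : ℝ) := le_trans (Int.floor_le _) h1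
      exact_mod_cast this
    · have : (x : ℝ) ≤ (⌈R⌉ : ℝ) := le_trans h2 (Int.le_ceil _)
      exact_mod_cast this
  have Hp := mono p hp.1 hp.2
  have Hq := mono q hq.1 hq.2
  simp only [Set.mem_Icc, Prod.le_def]
  exact ⟨⟨Hp.1, Hq.1⟩, ⟨Hp.2, Hq.2⟩⟩

theorem primitive_sector_symmetry (t : EuclideanSpace ℝ (Fin 2)) (R : ℝ) (hR : 0 < R)
    (g : ℝ → ℝ) :
    (∑ᶠ ξ ∈ {ξ : ℤ × ℤ | IsPrimitive ξ ∧ znorm ξ ≤ R}, ⟪t, latPt ξ⟫ ^ 2 * g (znorm ξ)) =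
      ‖t‖ ^ 2 / 2 *
        ∑ᶠ ξ ∈ {ξ : ℤ × ℤ | IsPrimitive ξ ∧ znorm ξ ≤ R}, znorm ξ ^ 2 * g (znorm ξ) := by
  have hS := finite_S R
  set S := {ξ : ℤ × ℤ | IsPrimitive ξ ∧ znorm ξ ≤ R} with hSdef
  rw [← hS.coe_toFinset, finsum_mem_coe_finset, finsum_mem_coe_finset]
  set F := hS.toFinset with hF
  have hmem : ∀ ξ : ℤ × ℤ, ξ ∈ F ↔ IsPrimitive ξ ∧ znorm ξ ≤ R := by
    intro ξ; rw [hF, Set.Finite.mem_toFinset]; rfl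
  have hrotmem : ∀ ξ ∈ F, ((-ξ.2, ξ.1) : ℤ × ℤ) ∈ F := by
    intro ξ hξ
    rw [hmem] at hξ ⊢
    exact ⟨isPrimitive_rot hξ.1, by rw [znorm_rot]; exact hξ.2⟩
  have hbij : ∑ ξ ∈ F, ⟪t, latPt ξ⟫ ^ 2 * g (znorm ξ) =
      ∑ ξ ∈ F, ⟪t, latPt (-ξ.2, ξ.1)⟫ ^ 2 * g (znorm (-ξ.2, ξ.1)) := by
    refine Finset.sum_nbij' (fun ξ => ((ξ.2, -ξ.1) : ℤ × ℤ)) (fun ξ => ((-ξ.2, ξ.1) : ℤ × ℤ))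
      ?_ hrotmem ?_ ?_ ?_
    · intro ξ hξ
      rw [hmem] at hξ ⊢
      constructor
      · have := isPrimitive_rot (isPrimitive_rot (isPrimitive_rot hξ.1))
        simpa using this
      · have : znorm (ξ.2, -ξ.1) = znorm ξ := by simp [znorm]; ring_nf
        rw [this]; exact hξ.2
    · intro ξ _; simp
    · intro ξ _; simp
    · intro ξ _; simp
  have hsplit : (2 : ℝ) * ∑ ξ ∈ F, ⟪t, latPt ξ⟫ ^ 2 * g (znorm ξ) =
      ‖t‖ ^ 2 * ∑ ξ ∈ F, znorm ξ ^ 2 * g (znorm ξ) := by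
    rw [two_mul]
    nth_rewrite 2 [hbij]
    rw [← Finset.sum_add_distrib, Finset.mul_sum]
    apply Finset.sum_congr rfl
    intro ξ _
    rw [znorm_rot, ← add_mul, key_inner t ξ]
    ring
  linear_combination hsplit / 2
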